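/- For every λ ∈ ℝ, μ > 0 and ψ ∈ L²(ℝ,ℂ), the function F(x) = ∫_0^∞ e^{−μt} ψ(x − t) dt + 𝟙_{(0,∞)}(x)·(e^{iλ} − 1)·e^{−μx}·∫_0^∞ e^{−μt} ψ(−t) dt is continuous on ℝ \ {0}, its one-sided limits at 0 exist, and they satisfy the phase-jump relation lim_{x→0+} F(x) = e^{iλ}·lim_{x→0−} F(x). -/

import Mathlib

open MeasureTheory Complex
open Set Filter

lemma exp2_int (μ x : ℝ) (hμ : 0 < μ) :
    IntegrableOn (fun s : ℝ => Real.exp (2*μ*s)) (Iic x) volume := by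
  have h1 : Integrable ((Ioi (-x)).indicator (fun t : ℝ => Real.exp (-(2*μ)*t))) volume :=
    (integrable_indicator_iff measurableSet_Ioi).2 (exp_neg_integrableOn_Ioi (-x) (by positivity))
  have h2 : Integrable (fun u : ℝ => ((Ioi (-x)).indicator (fun t : ℝ => Real.exp (-(2*μ)*t))) (-u)) volume :=
    h1.comp_neg
  have h3 : (fun u : ℝ => ((Ioi (-x)).indicator (fun t : ℝ => Real.exp (-(2*μ)*t))) (-u))
      = (Iio x).indicator (fun s : ℝ => Real.exp (2*μ*s)) := by
    funext u
    by_cases hu : u < x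
    · rw [indicator_of_mem (show -u ∈ Ioi (-x) by simpa using hu), indicator_of_mem (show u ∈ Iio x from hu)]
      ring_nf
    · rw [indicator_of_notMem (show -u ∉ Ioi (-x) by simpa using hu), indicator_of_notMem (show u ∉ Iio x from hu)]
  rw [h3] at h2
  have := (integrable_indicator_iff measurableSet_Iio).1 h2
  exact (integrableOn_Iic_iff_integrableOn_Iio).2 this

lemma h_int (μ x : ℝ) (hμ : 0 < μ) (ψ : Lp ℂ 2 (volume : Measure ℝ)) :
    IntegrableOn (fun s : ℝ => Complex.exp (μ * s) * (ψ : ℝ → ℂ) s) (Iic x) volume := by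
  have hψ : MemLp (ψ : ℝ → ℂ) 2 (volume.restrict (Iic x)) := (Lp.memLp ψ).restrict _
  have hφ : MemLp (fun s : ℝ => Complex.exp (μ * s)) 2 (volume.restrict (Iic x)) := by
    rw [memLp_two_iff_integrable_sq_norm (Continuous.aestronglyMeasurable (by continuity))]
    have : (fun s : ℝ => ‖Complex.exp (μ * s)‖ ^ 2) = fun s : ℝ => Real.exp (2*μ*s) := by
      funext s
      rw [Complex.norm_exp]
      rw [← Real.exp_nat_mul]
      norm_num
      ring_nf
    rw [this]
    exact exp2_int μ x hμ
  have := hψ.smul (φ := fun s : ℝ => Complex.exp (μ * s)) hφ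
      (p := 2) (q := 2) (r := 1) (hpqr := ⟨by simpa using ENNReal.inv_two_add_inv_two⟩)
  rw [memLp_one_iff_integrable] at this
  exact this

lemma cov (μ x : ℝ) (ψ : Lp ℂ 2 (volume : Measure ℝ)) :
    (∫ t in Ioi (0:ℝ), (Real.exp (-μ * t) : ℂ) * (ψ : ℝ → ℂ) (x - t))
      = Complex.exp (-(μ : ℂ) * x) *
        ∫ s in Iic x, Complex.exp (μ * s) * (ψ : ℝ → ℂ) s := by
  set g : ℝ → ℂ := (Ioi (0:ℝ)).indicator (fun t => (Real.exp (-μ * t) : ℂ) * (ψ : ℝ → ℂ) (x - t))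
    with hg
  have h1 : (∫ t in Ioi (0:ℝ), (Real.exp (-μ * t) : ℂ) * (ψ : ℝ → ℂ) (x - t)) = ∫ t, g t :=
    (integral_indicator measurableSet_Ioi).symm
  have h2 : (∫ t, g t) = ∫ s, g (x - s) := (integral_sub_left_eq_self g volume x).symm
  have h3 : (fun s => g (x - s)) = (Iio x).indicator
      (fun s => Complex.exp (-(μ : ℂ) * x) * (Complex.exp (μ * s) * (ψ : ℝ → ℂ) s)) := by
    funext s
    by_cases hs : s < x
    · rw [hg]
      rw [indicator_of_mem (show x - s ∈ Ioi (0:ℝ) by simpa using hs),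
        indicator_of_mem (show s ∈ Iio x from hs)]
      have hxc : ((-μ * (x - s) : ℝ) : ℂ) = -(μ:ℂ) * x + (μ:ℂ) * s := by push_cast; ring
      rw [show x - (x - s) = s by ring, Complex.ofReal_exp, hxc, Complex.exp_add]
      ring
    · rw [hg]
      rw [indicator_of_notMem (show x - s ∉ Ioi (0:ℝ) by simpa using hs),
        indicator_of_notMem (show s ∉ Iio x from hs)]
  rw [h1, h2, h3, integral_indicator measurableSet_Iio, integral_const_mul,
    ← integral_Iic_eq_integral_Iio]


/-- For `λ ∈ ℝ`, `μ > 0` and `ψ ∈ L²(ℝ,ℂ)`, the explicit resolvent representative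
`F(x) = ∫_0^∞ e^{-μt} ψ(x-t) dt + 𝟙_{(0,∞)}(x)(e^{iλ}-1)e^{-μx} ∫_0^∞ e^{-μt} ψ(-t) dt`
is continuous on `ℝ \ {0}`, has one-sided limits at `0`, and these satisfy the
phase-jump relation `lim_{x→0+} F(x) = e^{iλ}·lim_{x→0-} F(x)`. -/
theorem resolvent_phase_jump (lam : ℝ) (μ : ℝ) (hμ : 0 < μ)
    (ψ : Lp ℂ 2 (volume : Measure ℝ)) :
    let F : ℝ → ℂ := fun x =>
      (∫ t in Set.Ioi (0:ℝ), (Real.exp (-μ * t) : ℂ) * (ψ : ℝ → ℂ) (x - t)) +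
        (Set.Ioi (0:ℝ)).indicator 1 x * (Complex.exp (Complex.I * lam) - 1) *
          Complex.exp (-(μ : ℂ) * x) *
          (∫ t in Set.Ioi (0:ℝ), (Real.exp (-μ * t) : ℂ) * (ψ : ℝ → ℂ) (-t))
    ContinuousOn F {x : ℝ | x ≠ 0} ∧
      ∃ Lplus Lminus : ℂ,
        Filter.Tendsto F (nhdsWithin 0 (Set.Ioi 0)) (nhds Lplus) ∧
        Filter.Tendsto F (nhdsWithin 0 (Set.Iio 0)) (nhds Lminus) ∧
        Lplus = Complex.exp (Complex.I * lam) * Lminus := by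
  intro F
  set h : ℝ → ℂ := fun s => Complex.exp (μ * s) * (ψ : ℝ → ℂ) s with hh
  set H : ℝ → ℂ := fun x => ∫ s in Iic x, h s with hH
  set G : ℝ → ℂ := fun x => Complex.exp (-(μ:ℂ) * x) * H x with hG
  have hGeq : ∀ x : ℝ, (∫ t in Ioi (0:ℝ), (Real.exp (-μ*t):ℂ) * (ψ : ℝ → ℂ) (x - t)) = G x :=
    fun x => cov μ x ψ
  have hIntl : ∀ a b : ℝ, IntervalIntegrable h volume a b := by
    intro a b
    rw [intervalIntegrable_iff]
    exact (h_int μ (max a b) hμ ψ).mono_set Set.Ioc_subset_Iic_self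
  have hHc : Continuous H := by
    have hr : H = fun x => H 0 + ∫ t in (0:ℝ)..x, h t := by
      funext x
      have heq := intervalIntegral.integral_Iic_sub_Iic (h_int μ 0 hμ ψ) (h_int μ x hμ ψ)
      rw [hH]
      simp only []
      rw [← heq]
      ring
    rw [hr]
    exact continuous_const.add (intervalIntegral.continuous_primitive hIntl 0)
  have hGc : Continuous G := ((Complex.continuous_exp.comp (by continuity)).mul hHc)
  have hG0 : (∫ t in Ioi (0:ℝ), (Real.exp (-μ*t):ℂ) * (ψ : ℝ → ℂ) (-t)) = G 0 := by
    rw [← hGeq 0]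
    congr 1
    funext t
    rw [zero_sub]
  have hF : ∀ y : ℝ, F y = G y + (Ioi (0:ℝ)).indicator 1 y *
      (Complex.exp (Complex.I * lam) - 1) * Complex.exp (-(μ:ℂ)*y) * G 0 := by
    intro y
    show (∫ t in Ioi (0:ℝ), (Real.exp (-μ*t):ℂ) * (ψ : ℝ → ℂ) (y - t)) + _ = _
    rw [hGeq y, hG0]
  have hplusfun : Continuous fun y : ℝ => G y +
      (Complex.exp (Complex.I * lam) - 1) * Complex.exp (-(μ:ℂ)*y) * G 0 :=
    hGc.add (((continuous_const.mul (Complex.continuous_exp.comp (by continuity))).mul continuous_const))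
  constructor
  · intro x hx
    apply ContinuousAt.continuousWithinAt
    rcases lt_or_gt_of_ne (hx : x ≠ 0) with hlt | hgt
    · have hev : F =ᶠ[nhds x] G := by
        filter_upwards [Iio_mem_nhds hlt] with y hy
        rw [hF y, indicator_of_notMem (show y ∉ Ioi (0:ℝ) by simpa using le_of_lt hy)]
        simp
      exact hGc.continuousAt.congr hev.symm
    · have hev : F =ᶠ[nhds x] fun y => G y +
          (Complex.exp (Complex.I * lam) - 1) * Complex.exp (-(μ:ℂ)*y) * G 0 := by
        filter_upwards [Ioi_mem_nhds hgt] with y hy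
        rw [hF y, indicator_of_mem (show y ∈ Ioi (0:ℝ) from hy)]
        simp
      exact hplusfun.continuousAt.congr hev.symm
  · refine ⟨Complex.exp (Complex.I*lam) * G 0, G 0, ?_, ?_, rfl⟩
    · have hev : F =ᶠ[nhdsWithin 0 (Ioi 0)] fun y => G y +
          (Complex.exp (Complex.I * lam) - 1) * Complex.exp (-(μ:ℂ)*y) * G 0 :=
        eventually_nhdsWithin_of_forall fun y hy => by
          rw [hF y, indicator_of_mem (show y ∈ Ioi (0:ℝ) from hy)]; simp
      have hlim : Tendsto (fun y : ℝ => G y +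
          (Complex.exp (Complex.I * lam) - 1) * Complex.exp (-(μ:ℂ)*y) * G 0)
          (nhdsWithin 0 (Ioi 0)) (nhds (Complex.exp (Complex.I*lam) * G 0)) := by
        have := (hplusfun.tendsto 0).mono_left (nhdsWithin_le_nhds (s := Ioi (0:ℝ)))
        convert this using 2
        simp [Complex.exp_zero]
        ring
      exact hlim.congr' hev.symm
    · have hev : F =ᶠ[nhdsWithin 0 (Iio 0)] G :=
        eventually_nhdsWithin_of_forall fun y hy => by
          rw [hF y, indicator_of_notMem (show y ∉ Ioi (0:ℝ) by simpa using le_of_lt hy)]; simp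
      have hlim : Tendsto G (nhdsWithin 0 (Iio 0)) (nhds (G 0)) :=
        (hGc.tendsto 0).mono_left nhdsWithin_le_nhds
      exact hlim.congr' hev.symm
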